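/- Let Φ = |φ⟩⟨φ| with φ = (|00⟩ + |11⟩)/√2, let Π₀ = |00⟩⟨00|, and for 0 < p ≤ 1 let S_H = p·Φ + (1−p)·Π₀ be the Horodecki-type state. For 0 < p < 1 we have Cor_{S_H}(σ₁, σ₁) = p, Cor_{S_H}(σ₂, σ₂) = −p, and Cor_{S_H}(σ₃, σ₃) = 1, so Σ_{i=1}^{3} |Cor_{S_H}(σᵢ, σᵢ)| = 1 + 2p > 1 for every 0 < p < 1. -/

import Mathlib

open Matrix Complex
open scoped Kronecker ComplexConjugate ComplexOrder

noncomputable section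

abbrev M2 : Type := Matrix (Fin 2) (Fin 2) ℂ
abbrev M4 : Type := Matrix (Fin 2 × Fin 2) (Fin 2 × Fin 2) ℂ

/-- Pauli matrix σ₁. -/
def σ1 : M2 := !![0, 1; 1, 0]
/-- Pauli matrix σ₂. -/
def σ2 : M2 := !![0, -Complex.I; Complex.I, 0]
/-- Pauli matrix σ₃. -/
def σ3 : M2 := !![1, 0; 0, -1]

/-- The Pauli triple (σ₁, σ₂, σ₃). -/
def pauli : Fin 3 → M2 := ![σ1, σ2, σ3]

/-- A dichotomic observable: Hermitian, squares to the identity, traceless. -/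
def Dichotomic (A : M2) : Prop := A.IsHermitian ∧ A * A = 1 ∧ A.trace = 0

/-- A complementary triple of dichotomic observables. -/
def ComplementaryTriple (X : Fin 3 → M2) : Prop :=
  (∀ i, Dichotomic (X i)) ∧ ∀ i j, i ≠ j → (X i * X j).trace = 0

/-- Expectation value E_S(A ⊗ B) = tr(S·(A⊗B)) (its real part; it is real for states and
Hermitian observables). -/
def EE (S : M4) (A B : M2) : ℝ := (Matrix.trace (S * (A ⊗ₖ B))).re

/-- Covariance of A and B in the state S. -/
def Cov (S : M4) (A B : M2) : ℝ := EE S A B - EE S A 1 * EE S 1 B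

/-- Variance of a dichotomic observable A measured on the first subsystem. -/
def Var1 (S : M4) (A : M2) : ℝ := 1 - (EE S A 1) ^ 2
/-- Variance of a dichotomic observable B measured on the second subsystem. -/
def Var2 (S : M4) (B : M2) : ℝ := 1 - (EE S 1 B) ^ 2

/-- The Pearson correlation coefficient of observables A and B in the state S. -/
def Cor (S : M4) (A B : M2) : ℝ := Cov S A B / Real.sqrt (Var1 S A * Var2 S B)

/-- The rank-one projection |v⟩⟨v| onto a vector v ∈ ℂ⁴ ≅ ℂ²⊗ℂ². -/
def proj4 (v : Fin 2 × Fin 2 → ℂ) : M4 := Matrix.vecMulVec v (star v)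

/-- The Bell vector φ = (|00⟩ + |11⟩)/√2. -/
def bellVec : Fin 2 × Fin 2 → ℂ := fun p =>
  if p = (0, 0) ∨ p = (1, 1) then (1 / Real.sqrt 2 : ℝ) else 0

/-- The vector |00⟩. -/
def ket00 : Fin 2 × Fin 2 → ℂ := fun p => if p = (0, 0) then 1 else 0

/-- for the Horodecki-type state S_H = p·Φ + (1−p)·|00⟩⟨00| with 0 < p < 1,
Cor(σ₁,σ₁) = p, Cor(σ₂,σ₂) = −p, Cor(σ₃,σ₃) = 1, and the sum of absolute PCC's equals
1 + 2p, which exceeds 1. -/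
theorem horodecki_state_correlations (p : ℝ) (hp0 : 0 < p) (hp1 : p < 1) (SH : M4)
    (hform : SH = (p : ℂ) • proj4 bellVec + ((1 - p : ℝ) : ℂ) • proj4 ket00) :
    Cor SH σ1 σ1 = p ∧
    Cor SH σ2 σ2 = -p ∧
    Cor SH σ3 σ3 = 1 ∧
    ∑ i : Fin 3, |Cor SH (pauli i) (pauli i)| = 1 + 2 * p ∧
    1 < ∑ i : Fin 3, |Cor SH (pauli i) (pauli i)| := by
  subst hform
  set S : M4 := (p : ℂ) • proj4 bellVec + ((1 - p : ℝ) : ℂ) • proj4 ket00 with hS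
  have e11 : EE S σ1 σ1 = p := by
    simp [hS, EE, Matrix.trace, Matrix.mul_apply, Fintype.sum_prod_type, Fin.sum_univ_two,
      proj4, bellVec, ket00, vecMulVec_apply, kroneckerMap_apply, σ1, Matrix.one_apply,
      Prod.ext_iff]
    field_simp
    simp only [Real.sq_sqrt (by norm_num : (0:ℝ) ≤ 2), Real.mul_self_sqrt (by norm_num : (0:ℝ) ≤ 2)]
    norm_num
  have e10 : EE S σ1 1 = 0 := by
    simp [hS, EE, Matrix.trace, Matrix.mul_apply, Fintype.sum_prod_type, Fin.sum_univ_two,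
      proj4, bellVec, ket00, vecMulVec_apply, kroneckerMap_apply, σ1, Matrix.one_apply,
      Prod.ext_iff]
  have e01 : EE S 1 σ1 = 0 := by
    simp [hS, EE, Matrix.trace, Matrix.mul_apply, Fintype.sum_prod_type, Fin.sum_univ_two,
      proj4, bellVec, ket00, vecMulVec_apply, kroneckerMap_apply, σ1, Matrix.one_apply,
      Prod.ext_iff]
  have f11 : EE S σ2 σ2 = -p := by
    simp [hS, EE, Matrix.trace, Matrix.mul_apply, Fintype.sum_prod_type, Fin.sum_univ_two,
      proj4, bellVec, ket00, vecMulVec_apply, kroneckerMap_apply, σ2, Matrix.one_apply,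
      Prod.ext_iff]
    field_simp
    simp only [Real.sq_sqrt (by norm_num : (0:ℝ) ≤ 2), Real.mul_self_sqrt (by norm_num : (0:ℝ) ≤ 2)]
    norm_num
  have f10 : EE S σ2 1 = 0 := by
    simp [hS, EE, Matrix.trace, Matrix.mul_apply, Fintype.sum_prod_type, Fin.sum_univ_two,
      proj4, bellVec, ket00, vecMulVec_apply, kroneckerMap_apply, σ2, Matrix.one_apply,
      Prod.ext_iff]
  have f01 : EE S 1 σ2 = 0 := by
    simp [hS, EE, Matrix.trace, Matrix.mul_apply, Fintype.sum_prod_type, Fin.sum_univ_two,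
      proj4, bellVec, ket00, vecMulVec_apply, kroneckerMap_apply, σ2, Matrix.one_apply,
      Prod.ext_iff]
  have g11 : EE S σ3 σ3 = 1 := by
    simp [hS, EE, Matrix.trace, Matrix.mul_apply, Fintype.sum_prod_type, Fin.sum_univ_two,
      proj4, bellVec, ket00, vecMulVec_apply, kroneckerMap_apply, σ3, Matrix.one_apply,
      Prod.ext_iff]
    field_simp
    simp only [Real.sq_sqrt (by norm_num : (0:ℝ) ≤ 2), Real.mul_self_sqrt (by norm_num : (0:ℝ) ≤ 2)]
    ring
  have g10 : EE S σ3 1 = 1 - p := by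
    simp [hS, EE, Matrix.trace, Matrix.mul_apply, Fintype.sum_prod_type, Fin.sum_univ_two,
      proj4, bellVec, ket00, vecMulVec_apply, kroneckerMap_apply, σ3, Matrix.one_apply,
      Prod.ext_iff]
  have g01 : EE S 1 σ3 = 1 - p := by
    simp [hS, EE, Matrix.trace, Matrix.mul_apply, Fintype.sum_prod_type, Fin.sum_univ_two,
      proj4, bellVec, ket00, vecMulVec_apply, kroneckerMap_apply, σ3, Matrix.one_apply,
      Prod.ext_iff]
  have c1 : Cor S σ1 σ1 = p := by
    simp [Cor, Cov, Var1, Var2, e11, e10, e01]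
  have c2 : Cor S σ2 σ2 = -p := by
    simp [Cor, Cov, Var1, Var2, f11, f10, f01]
  have hx : (0:ℝ) < 1 - (1 - p) ^ 2 := by nlinarith
  have c3 : Cor S σ3 σ3 = 1 := by
    rw [Cor, Cov, Var1, Var2, g11, g10, g01]
    have : (1:ℝ) - (1-p)*(1-p) = 1 - (1-p)^2 := by ring
    rw [this, Real.sqrt_mul_self hx.le, div_self hx.ne']
  have hsum : ∑ i : Fin 3, |Cor S (pauli i) (pauli i)| = 1 + 2 * p := by
    simp [pauli, Fin.sum_univ_three, c1, c2, c3, abs_of_pos hp0]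
    ring
  exact ⟨c1, c2, c3, hsum, by rw [hsum]; linarith⟩
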